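/- Let x ∈ (0,1) be irrational with regular continued fraction expansion x = [0; 1, a₂, a₃, a₄, …]. If a₂ = 1, then R(x) = [0; a₃+1, a₄, …]; if a₂ ≥ 2, then R(x) = [0; 1, a₂-1, a₃, a₄, …], where R is the Romik map. -/

import Mathlib

noncomputable def romik (x : ℝ) : ℝ :=
  if x < 1/3 then x / (1 - 2*x) else if x < 1/2 then 1/x - 2 else 2 - 1/x

private lemma fract_eq_self_sub_floor (v : ℝ) : Int.fract v = v - ⌊v⌋ := rfl

private lemma irr_fract_ne_zero {v : ℝ} (h : Irrational v) : Int.fract v ≠ 0 := by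
  rw [fract_eq_self_sub_floor]
  exact (h.sub_intCast _).ne_zero

private lemma of_s_congr {v v' : ℝ} (h0 : Int.fract v ≠ 0)
    (h : Int.fract v = Int.fract v') (n : ℕ) :
    (GenContFract.of v).s.get? n = (GenContFract.of v').s.get? n := by
  cases n with
  | zero =>
    have h1 : (GenContFract.of v).s.get? 0 = some ⟨1, ((⌊(Int.fract v)⁻¹⌋ : ℤ) : ℝ)⟩ :=
      GenContFract.of_s_head h0
    have h2 : (GenContFract.of v').s.get? 0 = some ⟨1, ((⌊(Int.fract v')⁻¹⌋ : ℤ) : ℝ)⟩ :=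
      GenContFract.of_s_head (h ▸ h0)
    rw [h1, h2, h]
  | succ n => rw [GenContFract.of_s_succ, GenContFract.of_s_succ, h]

/-- If `x ∈ (0,1)` is irrational with RCF expansion `[0; 1, a₂, a₃, a₄, …]`, then:
if `a₂ = 1`, `R(x) = [0; a₃ + 1, a₄, …]`; if `a₂ ≥ 2`, `R(x) = [0; 1, a₂ - 1, a₃, a₄, …]`. -/
theorem romik_rcf_flip_branch (x : ℝ) (hx : x ∈ Set.Ioo (0 : ℝ) 1)
    (hirr : Irrational x) (a : ℕ → ℕ)
    (ha : ∀ n : ℕ, (GenContFract.of x).partDens.get? n = some ((a (n + 1) : ℝ)))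
    (h1 : a 1 = 1) :
    (a 2 = 1 →
      ∀ n : ℕ, (GenContFract.of (romik x)).partDens.get? n =
        some (if n = 0 then ((a 3 : ℝ) + 1) else ((a (n + 3) : ℝ)))) ∧
    (2 ≤ a 2 →
      ∀ n : ℕ, (GenContFract.of (romik x)).partDens.get? n =
        some (if n = 0 then (1 : ℝ) else if n = 1 then ((a 2 : ℝ) - 1)
          else ((a (n + 1) : ℝ)))) := by
  obtain ⟨hx0, hx1⟩ := hx
  have hfx : Int.fract x = x := Int.fract_eq_self.2 ⟨hx0.le, hx1⟩
  have hfx0 : Int.fract x ≠ 0 := by rw [hfx]; exact ne_of_gt hx0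
  -- the sequence entries of x
  have sx : ∀ n, (GenContFract.of x).s.get? n = some ⟨1, (a (n+1) : ℝ)⟩ := by
    intro n
    obtain ⟨gp, hgp, hb⟩ := GenContFract.exists_s_b_of_partDen (ha n)
    have ha1 : gp.a = 1 := (GenContFract.of_partNum_eq_one_and_exists_int_partDen_eq hgp).1
    rw [hgp]; congr 1; cases gp; simp_all
  -- floor of x⁻¹ is 1
  have hfl1 : ⌊x⁻¹⌋ = 1 := by
    have hhead : (GenContFract.of x).s.get? 0 = some ⟨1, ((⌊(Int.fract x)⁻¹⌋ : ℤ) : ℝ)⟩ :=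
      GenContFract.of_s_head hfx0
    rw [hfx] at hhead
    have hb := congrArg GenContFract.Pair.b (Option.some.inj (hhead.symm.trans (sx 0)))
    simp only [h1, Nat.cast_one] at hb
    exact_mod_cast hb
  have hxinv_lt : x⁻¹ < 2 := by
    have := Int.lt_floor_add_one x⁻¹
    rw [hfl1] at this; push_cast at this; linarith
  have hx2 : 1/2 < x := by
    have hxx : x * x⁻¹ = 1 := mul_inv_cancel₀ (ne_of_gt hx0)
    nlinarith
  -- y = fract x⁻¹ = x⁻¹ - 1
  set y : ℝ := x⁻¹ - 1 with hy_def
  have hfxinv : Int.fract x⁻¹ = y := by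
    rw [fract_eq_self_sub_floor, hfl1]; push_cast; ring
  have hiy : Irrational y := by simpa using (hirr.inv).sub_intCast 1
  have hy0 : 0 < y := by
    have h1' : 1 < x⁻¹ := (one_lt_inv₀ hx0).2 hx1
    simp only [hy_def]; linarith
  have hy1 : y < 1 := by simp only [hy_def]; linarith
  have hyne : y ≠ 0 := ne_of_gt hy0
  have h1y : (1 : ℝ) - y ≠ 0 := sub_ne_zero.2 (ne_of_gt hy1)
  have hfy : Int.fract y = y := Int.fract_eq_self.2 ⟨hy0.le, hy1⟩
  -- romik x = 1 - y
  have hrom : romik x = 1 - y := by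
    rw [romik, if_neg (by linarith), if_neg (by linarith)]
    rw [hy_def, one_div]; ring
  -- sequence relations
  have sxinv : ∀ n, (GenContFract.of x⁻¹).s.get? n = (GenContFract.of x).s.get? (n+1) := by
    intro n; rw [GenContFract.of_s_succ, hfx]
  have syinv : ∀ n, (GenContFract.of y⁻¹).s.get? n = (GenContFract.of x).s.get? (n+2) := by
    intro n; rw [← sxinv, GenContFract.of_s_succ, hfxinv]
  -- floor of y⁻¹ = a 2
  have hfly : ⌊y⁻¹⌋ = (a 2 : ℤ) := by
    have hhead : (GenContFract.of x⁻¹).s.get? 0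
        = some ⟨1, ((⌊(Int.fract x⁻¹)⁻¹⌋ : ℤ) : ℝ)⟩ :=
      GenContFract.of_s_head (by rw [hfxinv]; exact hyne)
    rw [hfxinv] at hhead
    have hb := congrArg GenContFract.Pair.b
      (Option.some.inj ((hhead.symm.trans (sxinv 0)).trans (sx 1)))
    have hb2 : ((⌊y⁻¹⌋ : ℤ) : ℝ) = ((a 2 : ℕ) : ℝ) := hb
    exact_mod_cast hb2
  -- z = fract y⁻¹
  set z : ℝ := Int.fract y⁻¹ with hz_def
  have hiz : Irrational z := by
    rw [hz_def, fract_eq_self_sub_floor]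
    exact (hiy.inv).sub_intCast _
  have hz0 : z ≠ 0 := hiz.ne_zero
  have szinv : ∀ n, (GenContFract.of z⁻¹).s.get? n = (GenContFract.of x).s.get? (n+3) := by
    intro n; rw [← syinv, GenContFract.of_s_succ, ← hz_def]
  -- floor of z⁻¹ = a 3
  have hflz : ⌊z⁻¹⌋ = (a 3 : ℤ) := by
    have hhead : (GenContFract.of y⁻¹).s.get? 0
        = some ⟨1, ((⌊(Int.fract y⁻¹)⁻¹⌋ : ℤ) : ℝ)⟩ :=
      GenContFract.of_s_head (by rw [← hz_def]; exact hz0)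
    rw [← hz_def] at hhead
    have hb := congrArg GenContFract.Pair.b
      (Option.some.inj ((hhead.symm.trans (syinv 0)).trans (sx 2)))
    have hb2 : ((⌊z⁻¹⌋ : ℤ) : ℝ) = ((a 3 : ℕ) : ℝ) := hb
    exact_mod_cast hb2
  -- the Romik image w = 1 - y
  set w : ℝ := 1 - y with hw_def
  have hiw : Irrational w := by
    have := hiy.intCast_sub 1
    simpa [hw_def] using this
  have hw1 : w < 1 := by simp only [hw_def]; linarith
  constructor
  · -- case a₂ = 1
    intro h2 n
    have hfly1 : ⌊y⁻¹⌋ = 1 := by rw [hfly, h2]; norm_num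
    have hyinv_lt : y⁻¹ < 2 := by
      have := Int.lt_floor_add_one y⁻¹
      rw [hfly1] at this; push_cast at this; linarith
    have hy2 : 1/2 < y := by
      have hyy : y * y⁻¹ = 1 := mul_inv_cancel₀ hyne
      nlinarith [mul_lt_mul_of_pos_left hyinv_lt hy0]
    have hw0 : 0 < w := by simp only [hw_def]; linarith
    have hfw : Int.fract w = w := Int.fract_eq_self.2 ⟨hw0.le, hw1⟩
    have hzval : z = y⁻¹ - 1 := by
      rw [hz_def, fract_eq_self_sub_floor, hfly1]; push_cast; ring
    have hzval' : z = (1 - y) / y := by rw [hzval]; field_simp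
    have hwinv : w⁻¹ = z⁻¹ + 1 := by
      rw [hzval', inv_div, hw_def]
      field_simp
      rw [div_add_one (sub_ne_zero.2 (ne_of_gt hy1))]; ring
    cases n with
    | zero =>
      have hs : (GenContFract.of w).s.get? 0 = some ⟨1, ((⌊z⁻¹⌋ + 1 : ℤ) : ℝ)⟩ := by
        have hhead : (GenContFract.of w).s.get? 0
            = some ⟨1, ((⌊(Int.fract w)⁻¹⌋ : ℤ) : ℝ)⟩ :=
          GenContFract.of_s_head (by rw [hfw]; exact ne_of_gt hw0)
        rw [hfw, hwinv, Int.floor_add_one] at hhead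
        exact hhead
      rw [hrom, GenContFract.partDen_eq_s_b hs]
      rw [hflz]; push_cast; simp
    | succ n =>
      have hs : (GenContFract.of w).s.get? (n+1) = some ⟨1, (a (n+4) : ℝ)⟩ := by
        rw [GenContFract.of_s_succ, hfw,
          of_s_congr (v' := z⁻¹) (irr_fract_ne_zero hiw.inv)
            (by rw [hwinv, Int.fract_add_one]) n, szinv n]
        exact sx (n+3)
      rw [hrom, GenContFract.partDen_eq_s_b hs]
      simp
  · -- case a₂ ≥ 2
    intro h2 n
    have hyinv_ge : (2 : ℝ) ≤ y⁻¹ := by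
      have h := Int.floor_le y⁻¹
      rw [hfly] at h
      have : (2 : ℝ) ≤ ((a 2 : ℤ) : ℝ) := by exact_mod_cast h2
      linarith
    have hy_le : y ≤ 1/2 := by
      have hyy : y * y⁻¹ = 1 := mul_inv_cancel₀ hyne
      nlinarith [mul_le_mul_of_nonneg_left hyinv_ge hy0.le]
    have hy_lt : y < 1/2 := lt_of_le_of_ne hy_le
      (fun h => hiy (h ▸ ⟨1/2, by norm_num⟩))
    have hw0 : 0 < w := by simp only [hw_def]; linarith
    have hw2 : 1/2 < w := by simp only [hw_def]; linarith
    have hfw : Int.fract w = w := Int.fract_eq_self.2 ⟨hw0.le, hw1⟩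
    have hwne : w ≠ 0 := ne_of_gt hw0
    have hwinv1 : 1 < w⁻¹ := (one_lt_inv₀ hw0).2 hw1
    have hwinv2 : w⁻¹ < 2 := by
      have hww : w * w⁻¹ = 1 := mul_inv_cancel₀ hwne
      nlinarith [mul_lt_mul_of_pos_right hw2 (inv_pos.2 hw0)]
    have hflw : ⌊w⁻¹⌋ = 1 := by
      apply Int.floor_eq_iff.2
      constructor <;> push_cast <;> linarith
    set u : ℝ := w⁻¹ - 1 with hu_def
    have hfwinv : Int.fract w⁻¹ = u := by
      rw [fract_eq_self_sub_floor, hflw]; push_cast; ring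
    have huval : u = y / w := by
      rw [hu_def, show y = 1 - w from by rw [hw_def]; ring, sub_div, div_self hwne, one_div]
    have huinv : u⁻¹ = y⁻¹ - 1 := by
      rw [huval, inv_div, hw_def, sub_div, div_self hyne, one_div]
    have hfuinv : Int.fract u⁻¹ = z := by
      rw [huinv, hz_def, Int.fract_sub_one]
    match n with
    | 0 =>
      have hs : (GenContFract.of w).s.get? 0 = some ⟨1, ((1 : ℤ) : ℝ)⟩ := by
        have hhead : (GenContFract.of w).s.get? 0
            = some ⟨1, ((⌊(Int.fract w)⁻¹⌋ : ℤ) : ℝ)⟩ :=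
          GenContFract.of_s_head (by rw [hfw]; exact hwne)
        rw [hfw, hflw] at hhead
        exact hhead
      rw [hrom, GenContFract.partDen_eq_s_b hs]
      have hn0 : ¬(n + 2 = 0) := by omega
      have hn1 : ¬(n + 2 = 1) := by omega
      simp [hn0, hn1, show n + 2 + 1 = n + 3 from rfl]
    | 1 =>
      have hs : (GenContFract.of w).s.get? 1 = some ⟨1, (((a 2 : ℤ) - 1 : ℤ) : ℝ)⟩ := by
        rw [GenContFract.of_s_succ, hfw]
        have hhead : (GenContFract.of w⁻¹).s.get? 0
            = some ⟨1, ((⌊(Int.fract w⁻¹)⁻¹⌋ : ℤ) : ℝ)⟩ :=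
          GenContFract.of_s_head (irr_fract_ne_zero hiw.inv)
        rw [hfwinv] at hhead
        have hflu : ⌊u⁻¹⌋ = (a 2 : ℤ) - 1 := by
          rw [huinv, show (1:ℝ) = ((1:ℤ):ℝ) by norm_num, Int.floor_sub_intCast, hfly]
        rw [hflu] at hhead
        exact hhead
      rw [hrom, GenContFract.partDen_eq_s_b hs]
      push_cast; norm_num
    | (n+2) =>
      have hs : (GenContFract.of w).s.get? (n+2) = some ⟨1, (a (n+3) : ℝ)⟩ := by
        rw [GenContFract.of_s_succ, hfw, GenContFract.of_s_succ, hfwinv,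
          of_s_congr (v' := y⁻¹) (by rw [hfuinv]; exact hz0)
            (by rw [hfuinv, hz_def]) n, syinv n]
        exact sx (n+2)
      rw [hrom, GenContFract.partDen_eq_s_b hs]
      have hn0 : ¬(n + 2 = 0) := by omega
      have hn1 : ¬(n + 2 = 1) := by omega
      simp [hn0, hn1, show n + 2 + 1 = n + 3 from rfl]
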